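/- For the three-agent one-dimensional HK system, if a Caratheodory solution satisfies |x_2(t̄)-x_1(t̄)|>1 at some time t̄ (with x_1≤x_2≤x_3), then x_1(t)=x_1(t̄) for all t≥t̄, i.e. the leftmost agent is frozen. -/

import Mathlib

open Real Set MeasureTheory

private lemma hk_bound (p q u v : ℝ → ℝ) (hpq : ∀ s, |q s| = |p s|)
    (huv : ∀ s, |v s| = |u s|) (s : ℝ) :
    |(if |p s| < 1 then (1:ℝ) else 0) * q s + (if |u s| < 1 then (1:ℝ) else 0) * v s| ≤ 2 := by
  have h1 : |(if |p s| < 1 then (1:ℝ) else 0) * q s| ≤ 1 := by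
    by_cases h : |p s| < 1
    · rw [if_pos h, one_mul, hpq]; exact h.le
    · simp [h]
  have h2 : |(if |u s| < 1 then (1:ℝ) else 0) * v s| ≤ 1 := by
    by_cases h : |u s| < 1
    · rw [if_pos h, one_mul, huv]; exact h.le
    · simp [h]
  calc |(if |p s| < 1 then (1:ℝ) else 0) * q s + (if |u s| < 1 then (1:ℝ) else 0) * v s|
      ≤ |(if |p s| < 1 then (1:ℝ) else 0) * q s| + |(if |u s| < 1 then (1:ℝ) else 0) * v s| :=
        abs_add_le _ _
    _ ≤ 2 := by linarith

private lemma hk_meas (x f : ℝ → ℝ) (hb : ∀ s : ℝ, |f s| ≤ 2)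
    (hsol : ∀ t ≥ (0:ℝ), x t = x 0 + ∫ s in (0:ℝ)..t, f s) (t : ℝ) :
    AEMeasurable x (volume.restrict (Set.Ioc 0 t)) := by
  classical
  set S : Set ℝ := {u | 0 ≤ u ∧ MeasureTheory.IntegrableOn f (Set.Ioc 0 u)} with hSdef
  have hSord : S.OrdConnected := by
    refine ⟨fun a ha b hbb c hc => ?_⟩
    exact ⟨ha.1.trans hc.1, hbb.2.mono_set (Set.Ioc_subset_Ioc le_rfl hc.2)⟩
  have hSm : MeasurableSet S := hSord.measurableSet
  have key : ∀ a b : ℝ, a ∈ S → b ∈ S → b ≤ a → |x a - x b| ≤ 2 * |a - b| := by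
    intro a b ha hb' hba
    have hIa : IntervalIntegrable f volume 0 a :=
      (intervalIntegrable_iff_integrableOn_Ioc_of_le ha.1).2 ha.2
    have hIb : IntervalIntegrable f volume 0 b :=
      (intervalIntegrable_iff_integrableOn_Ioc_of_le hb'.1).2 hb'.2
    have hx : x a - x b = ∫ s in b..a, f s := by
      rw [hsol a ha.1, hsol b hb'.1, ← intervalIntegral.integral_interval_sub_left hIa hIb]
      ring
    rw [hx, ← Real.norm_eq_abs]
    exact intervalIntegral.norm_integral_le_of_norm_le_const fun s _ => by
      simpa [Real.norm_eq_abs] using hb s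
  have hlip : LipschitzOnWith 2 x S := by
    refine LipschitzOnWith.of_dist_le_mul ?_
    intro a ha b hb'
    rw [Real.dist_eq, Real.dist_eq]
    have h2 : ((2:NNReal):ℝ) = 2 := by norm_num
    rw [h2]
    rcases le_total b a with h | h
    · exact key a b ha hb' h
    · rw [abs_sub_comm (x a), abs_sub_comm a]; exact key b a hb' ha h
  have hconst : ∀ u, 0 ≤ u → u ∉ S → x u = x 0 := by
    intro u hu hus
    have hni : ¬ MeasureTheory.IntegrableOn f (Set.Ioc 0 u) := fun h => hus ⟨hu, h⟩
    have h := hsol u hu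
    rwa [intervalIntegral.integral_of_le hu, MeasureTheory.integral_undef hni, add_zero] at h
  have hA : AEMeasurable x (volume.restrict (S ∩ Set.Ioc 0 t)) :=
    (hlip.continuousOn.mono Set.inter_subset_left).aemeasurable (hSm.inter measurableSet_Ioc)
  have hB : AEMeasurable x (volume.restrict (Set.Ioc 0 t \ S)) := by
    refine (aemeasurable_const (b := x 0)).congr ?_
    filter_upwards [MeasureTheory.ae_restrict_of_forall_mem (measurableSet_Ioc.diff hSm)
      (fun u hu => hconst u hu.1.1.le hu.2)] with u hu
    exact hu.symm
  have hsub : Set.Ioc 0 t ⊆ (S ∩ Set.Ioc 0 t) ∪ (Set.Ioc 0 t \ S) := by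
    intro u hu
    by_cases h : u ∈ S
    · exact Or.inl ⟨h, hu⟩
    · exact Or.inr ⟨hu, h⟩
  exact (aemeasurable_union_iff.2 ⟨hA, hB⟩).mono_measure (Measure.restrict_mono hsub le_rfl)

private lemma hk_int (p q u v : ℝ → ℝ) (t : ℝ)
    (hpq : ∀ s, |q s| = |p s|) (huv : ∀ s, |v s| = |u s|)
    (hp : AEMeasurable p (volume.restrict (Set.Ioc 0 t)))
    (hq : AEMeasurable q (volume.restrict (Set.Ioc 0 t)))
    (hu : AEMeasurable u (volume.restrict (Set.Ioc 0 t)))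
    (hv : AEMeasurable v (volume.restrict (Set.Ioc 0 t))) :
    MeasureTheory.IntegrableOn
      (fun s => (if |p s| < 1 then (1:ℝ) else 0) * q s + (if |u s| < 1 then (1:ℝ) else 0) * v s)
      (Set.Ioc 0 t) := by
  have hφ : Measurable fun y : ℝ => if |y| < 1 then (1:ℝ) else 0 :=
    Measurable.ite (measurableSet_lt (continuous_abs.measurable) measurable_const)
      measurable_const measurable_const
  refine MeasureTheory.Integrable.mono' (g := fun _ => (2:ℝ))
    (MeasureTheory.integrableOn_const measure_Ioc_lt_top.ne) ?_ ?_
  · exact (((hφ.comp_aemeasurable hp).mul hq).add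
      ((hφ.comp_aemeasurable hu).mul hv)).aestronglyMeasurable
  · exact Filter.Eventually.of_forall fun s => by
      simpa [Real.norm_eq_abs] using hk_bound p q u v hpq huv s

private lemma hk_diff (x f : ℝ → ℝ)
    (hsol : ∀ t ≥ (0:ℝ), x t = x 0 + ∫ s in (0:ℝ)..t, f s)
    (hI : ∀ t : ℝ, MeasureTheory.IntegrableOn f (Set.Ioc 0 t))
    {a b : ℝ} (ha : 0 ≤ a) (hab : a ≤ b) :
    x b - x a = ∫ s in a..b, f s := by
  have hIb : IntervalIntegrable f volume 0 b :=
    (intervalIntegrable_iff_integrableOn_Ioc_of_le (ha.trans hab)).2 (hI b)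
  have hIa : IntervalIntegrable f volume 0 a :=
    (intervalIntegrable_iff_integrableOn_Ioc_of_le ha).2 (hI a)
  rw [hsol b (ha.trans hab), hsol a ha, ← intervalIntegral.integral_interval_sub_left hIb hIa]
  ring

private lemma hk_cont (x f : ℝ → ℝ) (hb : ∀ s : ℝ, |f s| ≤ 2)
    (hsol : ∀ t ≥ (0:ℝ), x t = x 0 + ∫ s in (0:ℝ)..t, f s)
    (hI : ∀ t : ℝ, MeasureTheory.IntegrableOn f (Set.Ioc 0 t)) :
    ContinuousOn x (Set.Ici 0) := by
  have key : ∀ a b : ℝ, 0 ≤ b → b ≤ a → |x a - x b| ≤ 2 * |a - b| := by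
    intro a b hb0 hba
    rw [hk_diff x f hsol hI hb0 hba, ← Real.norm_eq_abs]
    exact intervalIntegral.norm_integral_le_of_norm_le_const fun s _ => by
      simpa [Real.norm_eq_abs] using hb s
  refine (LipschitzOnWith.of_dist_le_mul (K := 2) ?_).continuousOn
  intro a ha b hb'
  rw [Real.dist_eq, Real.dist_eq]
  have h2 : ((2:NNReal):ℝ) = 2 := by norm_num
  rw [h2]
  rcases le_total b a with h | h
  · exact key a b hb' h
  · rw [abs_sub_comm (x a), abs_sub_comm a]; exact key b a ha h

/-- For the three-agent 1D HK system with ordered agents `x₁ ≤ x₂ ≤ x₃`, if a Caratheodory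
solution (in integral form) satisfies `|x₂(t̄) - x₁(t̄)| > 1` at some time `t̄ ≥ 0`, then the
leftmost agent is frozen: `x₁(t) = x₁(t̄)` for all `t ≥ t̄`. -/
theorem stmt_8 (x1 x2 x3 : ℝ → ℝ)
    (horder : ∀ t ≥ (0:ℝ), x1 t ≤ x2 t ∧ x2 t ≤ x3 t)
    (hsol1 : ∀ t ≥ (0:ℝ), x1 t = x1 0 + ∫ s in (0:ℝ)..t,
      ((if |x1 s - x2 s| < 1 then (1:ℝ) else 0) * (x2 s - x1 s)
        + (if |x1 s - x3 s| < 1 then (1:ℝ) else 0) * (x3 s - x1 s)))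
    (hsol2 : ∀ t ≥ (0:ℝ), x2 t = x2 0 + ∫ s in (0:ℝ)..t,
      ((if |x1 s - x2 s| < 1 then (1:ℝ) else 0) * (x1 s - x2 s)
        + (if |x2 s - x3 s| < 1 then (1:ℝ) else 0) * (x3 s - x2 s)))
    (hsol3 : ∀ t ≥ (0:ℝ), x3 t = x3 0 + ∫ s in (0:ℝ)..t,
      ((if |x1 s - x3 s| < 1 then (1:ℝ) else 0) * (x1 s - x3 s)
        + (if |x2 s - x3 s| < 1 then (1:ℝ) else 0) * (x2 s - x3 s)))
    (tb : ℝ) (htb : 0 ≤ tb)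
    (hgt : |x2 tb - x1 tb| > 1) :
    ∀ t ≥ tb, x1 t = x1 tb := by
  classical
  intro t ht
  -- the three vector fields
  set e1 : ℝ → ℝ := fun s => (if |x1 s - x2 s| < 1 then (1:ℝ) else 0) * (x2 s - x1 s)
    + (if |x1 s - x3 s| < 1 then (1:ℝ) else 0) * (x3 s - x1 s) with he1
  set e2 : ℝ → ℝ := fun s => (if |x1 s - x2 s| < 1 then (1:ℝ) else 0) * (x1 s - x2 s)
    + (if |x2 s - x3 s| < 1 then (1:ℝ) else 0) * (x3 s - x2 s) with he2
  set e3 : ℝ → ℝ := fun s => (if |x1 s - x3 s| < 1 then (1:ℝ) else 0) * (x1 s - x3 s)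
    + (if |x2 s - x3 s| < 1 then (1:ℝ) else 0) * (x2 s - x3 s) with he3
  have hb1 : ∀ s : ℝ, |e1 s| ≤ 2 := fun s =>
    hk_bound (fun s => x1 s - x2 s) (fun s => x2 s - x1 s)
      (fun s => x1 s - x3 s) (fun s => x3 s - x1 s)
      (fun s => abs_sub_comm _ _) (fun s => abs_sub_comm _ _) s
  have hb2 : ∀ s : ℝ, |e2 s| ≤ 2 := fun s =>
    hk_bound (fun s => x1 s - x2 s) (fun s => x1 s - x2 s)
      (fun s => x2 s - x3 s) (fun s => x3 s - x2 s)
      (fun s => rfl) (fun s => abs_sub_comm _ _) s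
  have hb3 : ∀ s : ℝ, |e3 s| ≤ 2 := fun s =>
    hk_bound (fun s => x1 s - x3 s) (fun s => x1 s - x3 s)
      (fun s => x2 s - x3 s) (fun s => x2 s - x3 s)
      (fun s => rfl) (fun s => rfl) s
  -- measurability of the trajectories
  have hm1 : ∀ u : ℝ, AEMeasurable x1 (volume.restrict (Set.Ioc 0 u)) := fun u =>
    hk_meas x1 e1 hb1 hsol1 u
  have hm2 : ∀ u : ℝ, AEMeasurable x2 (volume.restrict (Set.Ioc 0 u)) := fun u =>
    hk_meas x2 e2 hb2 hsol2 u
  have hm3 : ∀ u : ℝ, AEMeasurable x3 (volume.restrict (Set.Ioc 0 u)) := fun u =>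
    hk_meas x3 e3 hb3 hsol3 u
  -- integrability of the vector fields
  have hI1 : ∀ u : ℝ, MeasureTheory.IntegrableOn e1 (Set.Ioc 0 u) := fun u =>
    hk_int (fun s => x1 s - x2 s) (fun s => x2 s - x1 s)
      (fun s => x1 s - x3 s) (fun s => x3 s - x1 s) u
      (fun s => abs_sub_comm _ _) (fun s => abs_sub_comm _ _)
      ((hm1 u).sub (hm2 u)) ((hm2 u).sub (hm1 u))
      ((hm1 u).sub (hm3 u)) ((hm3 u).sub (hm1 u))
  have hI2 : ∀ u : ℝ, MeasureTheory.IntegrableOn e2 (Set.Ioc 0 u) := fun u =>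
    hk_int (fun s => x1 s - x2 s) (fun s => x1 s - x2 s)
      (fun s => x2 s - x3 s) (fun s => x3 s - x2 s) u
      (fun s => rfl) (fun s => abs_sub_comm _ _)
      ((hm1 u).sub (hm2 u)) ((hm1 u).sub (hm2 u))
      ((hm2 u).sub (hm3 u)) ((hm3 u).sub (hm2 u))
  -- continuity of the trajectories on [0, ∞)
  have hc1 : ContinuousOn x1 (Set.Ici 0) := hk_cont x1 e1 hb1 hsol1 hI1
  have hc2 : ContinuousOn x2 (Set.Ici 0) := hk_cont x2 e2 hb2 hsol2 hI2
  have hmax : Continuous fun s : ℝ => max tb s := continuous_const.max continuous_id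
  have hrange : ∀ s : ℝ, max tb s ∈ Set.Ici (0:ℝ) := fun s => le_trans htb (le_max_left _ _)
  have hg : Continuous fun s : ℝ => x2 (max tb s) - x1 (max tb s) :=
    (hc2.comp_continuous hmax hrange).sub (hc1.comp_continuous hmax hrange)
  have h1tb : 1 < x2 tb - x1 tb := by
    have := (horder tb htb).1
    rwa [abs_of_nonneg (by linarith)] at hgt
  -- the gap x2 - x1 stays above 1 on [tb, t]
  have hgap : ∀ s ∈ Set.Icc tb t, 1 < x2 s - x1 s := by
    by_contra hcon
    push_neg at hcon
    obtain ⟨s0, hs0, hs0le⟩ := hcon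
    set C : Set ℝ := Set.Icc tb t ∩ (fun s : ℝ => x2 (max tb s) - x1 (max tb s)) ⁻¹' Set.Iic 1
      with hCdef
    have hgeq : ∀ s : ℝ, tb ≤ s → x2 (max tb s) - x1 (max tb s) = x2 s - x1 s := fun s hs => by
      rw [max_eq_right hs]
    have hCne : C.Nonempty := ⟨s0, hs0, by
      simp only [Set.mem_preimage, Set.mem_Iic, hgeq s0 hs0.1]; exact hs0le⟩
    have hCclosed : IsClosed C := isClosed_Icc.inter (isClosed_Iic.preimage hg)
    have hCbdd : BddBelow C := ⟨tb, fun u hu => hu.1.1⟩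
    have hσmem := hCclosed.csInf_mem hCne hCbdd
    set σ := sInf C with hσdef
    obtain ⟨hσIcc, hσle⟩ := hσmem
    rw [Set.mem_preimage, Set.mem_Iic, hgeq σ hσIcc.1] at hσle
    have hIoo : ∀ u ∈ Set.Ioo tb σ, 1 < x2 u - x1 u := by
      intro u hu
      by_contra hle
      push_neg at hle
      have huC : u ∈ C := ⟨⟨hu.1.le, hu.2.le.trans hσIcc.2⟩, by
        rw [Set.mem_preimage, Set.mem_Iic, hgeq u hu.1.le]; exact hle⟩
      exact absurd (csInf_le hCbdd huC) (not_le.2 hu.2)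
    have hne : ∀ᵐ u : ℝ, u ≠ σ := by
      have h := MeasureTheory.compl_mem_ae_iff.2 (MeasureTheory.measure_singleton (σ:ℝ)
        (μ := volume))
      filter_upwards [h] with u hu using hu
    have hd1 := hk_diff x1 e1 hsol1 hI1 htb hσIcc.1
    have hd2 := hk_diff x2 e2 hsol2 hI2 htb hσIcc.1
    have hz1 : ∫ s in tb..σ, e1 s = 0 := by
      rw [intervalIntegral.integral_of_le hσIcc.1]
      refine MeasureTheory.integral_eq_zero_of_ae ?_
      filter_upwards [hne.filter_mono (MeasureTheory.ae_mono Measure.restrict_le_self),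
        MeasureTheory.self_mem_ae_restrict measurableSet_Ioc] with u huσ hmem
      have huo : u ∈ Set.Ioo tb σ := ⟨hmem.1, lt_of_le_of_ne hmem.2 huσ⟩
      have hgap' := hIoo u huo
      have hu0 : (0:ℝ) ≤ u := le_trans htb huo.1.le
      obtain ⟨h12, h23⟩ := horder u hu0
      have e12 : ¬ |x1 u - x2 u| < 1 := by
        rw [abs_sub_comm, abs_of_nonneg (by linarith)]; linarith
      have e13 : ¬ |x1 u - x3 u| < 1 := by
        rw [abs_sub_comm, abs_of_nonneg (by linarith)]; linarith
      show e1 u = (0 : ℝ)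
      rw [he1]
      simp only [if_neg e12, if_neg e13, zero_mul, add_zero]
    have hp2 : 0 ≤ ∫ s in tb..σ, e2 s := by
      rw [intervalIntegral.integral_of_le hσIcc.1]
      refine MeasureTheory.setIntegral_nonneg_ae measurableSet_Ioc ?_
      filter_upwards [hne] with u huσ
      intro hmem
      have huo : u ∈ Set.Ioo tb σ := ⟨hmem.1, lt_of_le_of_ne hmem.2 huσ⟩
      have hgap' := hIoo u huo
      have hu0 : (0:ℝ) ≤ u := le_trans htb huo.1.le
      obtain ⟨h12, h23⟩ := horder u hu0
      have e12 : ¬ |x1 u - x2 u| < 1 := by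
        rw [abs_sub_comm, abs_of_nonneg (by linarith)]; linarith
      rw [he2]
      simp only [if_neg e12, zero_mul, zero_add]
      by_cases h : |x2 u - x3 u| < 1
      · rw [if_pos h, one_mul]; linarith
      · rw [if_neg h, zero_mul]
    rw [hz1] at hd1
    linarith [hp2, hd2, hd1, hσle, h1tb]
  -- conclude: the drift of x1 vanishes on [tb, t]
  have hd := hk_diff x1 e1 hsol1 hI1 htb ht
  have hzero : ∫ s in tb..t, e1 s = 0 := by
    rw [intervalIntegral.integral_of_le ht]
    refine MeasureTheory.integral_eq_zero_of_ae ?_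
    filter_upwards [MeasureTheory.self_mem_ae_restrict measurableSet_Ioc] with u hmem
    have huIcc : u ∈ Set.Icc tb t := ⟨hmem.1.le, hmem.2⟩
    have hgap' := hgap u huIcc
    have hu0 : (0:ℝ) ≤ u := le_trans htb huIcc.1
    obtain ⟨h12, h23⟩ := horder u hu0
    have e12 : ¬ |x1 u - x2 u| < 1 := by
      rw [abs_sub_comm, abs_of_nonneg (by linarith)]; linarith
    have e13 : ¬ |x1 u - x3 u| < 1 := by
      rw [abs_sub_comm, abs_of_nonneg (by linarith)]; linarith
    show e1 u = (0 : ℝ)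
    rw [he1]
    simp only [if_neg e12, if_neg e13, zero_mul, add_zero]
  rw [hzero] at hd
  linarith
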